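/- Let Q be a key polynomial, α(Q) := min{deg(f) : ν_Q(f) < ν(f)} (∞ if ν_Q = ν), and Ψ(Q) := {f monic : ν_Q(f) < ν(f) and deg(f) = α(Q)}. Then every Q' ∈ Ψ(Q) is a key polynomial, and ε(Q) < ε(Q'). -/

import Mathlib

open Polynomial
open scoped Classical
noncomputable section

/-- `ν` is (the restriction to nonzero polynomials of) a valuation on `K[x]`,
nontrivial on `K`, with `ν(x) ≥ 0`.  Values are taken in a linearly ordered
field `Γ` (playing the role of the divisible hull of the value group). -/
structure IsVal {K : Type*} [Field K] {Γ : Type*} [Field Γ] [LinearOrder Γ] [IsStrictOrderedRing Γ]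
    (ν : Polynomial K → Γ) : Prop where
  map_mul : ∀ f g : Polynomial K, f ≠ 0 → g ≠ 0 → ν (f * g) = ν f + ν g
  map_add : ∀ f g : Polynomial K, f ≠ 0 → g ≠ 0 → f + g ≠ 0 →
    min (ν f) (ν g) ≤ ν (f + g)
  nontrivial : ∃ a : K, a ≠ 0 ∧ ν (C a) ≠ 0
  nonneg_x : 0 ≤ ν X

/-- `ε(f) = max_{b ≥ 1, ∂_b f ≠ 0} (ν(f) - ν(∂_b f))/b`, where `∂_b` is the
`b`-th formal (Hasse) derivative.  (Terms with `∂_b f = 0` correspond to the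
value `-∞` and are omitted from the maximum.) -/
noncomputable def eps {K : Type*} [Field K] {Γ : Type*} [Field Γ] [LinearOrder Γ] [IsStrictOrderedRing Γ]
    (ν : Polynomial K → Γ) (f : Polynomial K) : Γ :=
  if h : ((Finset.Icc 1 f.natDegree).filter
      fun b => Polynomial.hasseDeriv b f ≠ 0).Nonempty then
    ((Finset.Icc 1 f.natDegree).filter
      fun b => Polynomial.hasseDeriv b f ≠ 0).sup' h
      fun b => (ν f - ν (Polynomial.hasseDeriv b f)) / (b : Γ)
  else 0

/-- A monic (nonconstant) polynomial `Q` is a key polynomial for `ν` if every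
`f ∈ K[x]` with `ε(f) ≥ ε(Q)` satisfies `deg f ≥ deg Q`. -/
def IsKeyPol {K : Type*} [Field K] {Γ : Type*} [Field Γ] [LinearOrder Γ] [IsStrictOrderedRing Γ]
    (ν : Polynomial K → Γ) (Q : Polynomial K) : Prop :=
  Q.Monic ∧ 1 ≤ Q.natDegree ∧
    ∀ f : Polynomial K, 1 ≤ f.natDegree → eps ν Q ≤ eps ν f →
      Q.natDegree ≤ f.natDegree

/-- The `i`-th coefficient `f_i` of the `q`-standard expansion
`f = Σ f_i q^i` (each `f_i = 0` or `deg f_i < deg q`), for `q` monic. -/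
noncomputable def qCoeff {K : Type*} [Field K] (q f : Polynomial K) (i : ℕ) :
    Polynomial K :=
  (f /ₘ q ^ i) %ₘ q

/-- The `q`-truncation `ν_q(f) = min_i ν(f_i q^i)` of `ν`, the minimum taken
over the nonzero coefficients of the `q`-standard expansion of `f`. -/
noncomputable def truncVal {K : Type*} [Field K] {Γ : Type*}
    [Field Γ] [LinearOrder Γ] [IsStrictOrderedRing Γ] (ν : Polynomial K → Γ) (q f : Polynomial K) : Γ :=
  if h : ((Finset.range (f.natDegree + 1)).filter
      fun i => qCoeff q f i ≠ 0).Nonempty then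
    ((Finset.range (f.natDegree + 1)).filter
      fun i => qCoeff q f i ≠ 0).inf' h
      fun i => ν (qCoeff q f i * q ^ i)
  else 0

/-- `I(Q) = {b : (ν(Q) - ν(∂_b Q))/b = ε(Q)}`. -/
def Iset {K : Type*} [Field K] {Γ : Type*} [Field Γ] [LinearOrder Γ] [IsStrictOrderedRing Γ]
    (ν : Polynomial K → Γ) (Q : Polynomial K) : Set ℕ :=
  {b | 1 ≤ b ∧ Polynomial.hasseDeriv b Q ≠ 0 ∧
    (ν Q - ν (Polynomial.hasseDeriv b Q)) / (b : Γ) = eps ν Q}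

/-- `S_Q(f) = {i : ν(f_i Q^i) = ν_Q(f)}` (over nonzero coefficients). -/
def Sset {K : Type*} [Field K] {Γ : Type*} [Field Γ] [LinearOrder Γ] [IsStrictOrderedRing Γ]
    (ν : Polynomial K → Γ) (q f : Polynomial K) : Set ℕ :=
  {i | qCoeff q f i ≠ 0 ∧ ν (qCoeff q f i * q ^ i) = truncVal ν q f}


variable {K : Type*} [Field K] {Γ : Type*} [Field Γ] [LinearOrder Γ] [IsStrictOrderedRing Γ]

/-- `Ψ(Q)`: the monic polynomials `f` with `ν_Q(f) < ν(f)` of minimal degree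
(`deg f = α(Q)`) among all polynomials whose value is not computed by `ν_Q`. -/
def Psi (ν : Polynomial K → Γ) (Q : Polynomial K) : Set (Polynomial K) :=
  {f | f.Monic ∧ truncVal ν Q f < ν f ∧
    ∀ g : Polynomial K, g ≠ 0 → truncVal ν Q g < ν g →
      f.natDegree ≤ g.natDegree}

/-! ### Auxiliary lemmas -/

section AuxVal

variable {ν : Polynomial K → Γ}

lemma IsVal.one (hν : IsVal ν) : ν 1 = 0 := by
  have := hν.map_mul 1 1 one_ne_zero one_ne_zero
  simp at this; linarith

lemma IsVal.neg (hν : IsVal ν) {f : Polynomial K} (hf : f ≠ 0) : ν (-f) = ν f := by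
  have hm1 : (-1 : Polynomial K) ≠ 0 := by simp
  have h1 : ν (-1 : Polynomial K) = 0 := by
    have := hν.map_mul (-1) (-1) hm1 hm1
    have h0 := hν.one
    simp at this; linarith
  have := hν.map_mul (-1) f hm1 hf
  simp only [neg_one_mul] at this
  rw [this, h1, zero_add]

lemma IsVal.pow (hν : IsVal ν) {f : Polynomial K} (hf : f ≠ 0) (n : ℕ) :
    ν (f ^ n) = (n : Γ) * ν f := by
  induction n with
  | zero => simpa using hν.one
  | succ n ih =>
      rw [pow_succ, hν.map_mul _ _ (pow_ne_zero n hf) hf, ih]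
      push_cast; ring

/-- Weak ultrametric bound for sums. -/
lemma IsVal.sum_le (hν : IsVal ν) {ι : Type*} (s : Finset ι) (g : ι → Polynomial K) (c : Γ)
    (h : ∀ i ∈ s, g i ≠ 0 → c ≤ ν (g i)) :
    (∑ i ∈ s, g i) = 0 ∨ c ≤ ν (∑ i ∈ s, g i) := by
  classical
  induction s using Finset.induction_on with
  | empty => simp
  | @insert a s ha ih =>
      rw [Finset.sum_insert ha]
      by_cases hs : (∑ i ∈ s, g i) = 0
      · rw [hs, add_zero]
        by_cases hga : g a = 0
        · exact Or.inl hga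
        · exact Or.inr (h a (Finset.mem_insert_self a s) hga)
      · have hle := (ih (fun i hi hgi => h i (Finset.mem_insert_of_mem hi) hgi)).resolve_left hs
        by_cases hga : g a = 0
        · rw [hga, zero_add]; exact Or.inr hle
        · by_cases hsum : g a + ∑ i ∈ s, g i = 0
          · exact Or.inl hsum
          · refine Or.inr (le_trans ?_ (hν.map_add _ _ hga hs hsum))
            exact le_min (h a (Finset.mem_insert_self a s) hga) hle

/-- Strict ultrametric bound for sums. -/
lemma IsVal.sum_lt (hν : IsVal ν) {ι : Type*} (s : Finset ι) (g : ι → Polynomial K) (c : Γ)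
    (h : ∀ i ∈ s, g i ≠ 0 → c < ν (g i)) :
    (∑ i ∈ s, g i) = 0 ∨ c < ν (∑ i ∈ s, g i) := by
  classical
  induction s using Finset.induction_on with
  | empty => simp
  | @insert a s ha ih =>
      rw [Finset.sum_insert ha]
      by_cases hs : (∑ i ∈ s, g i) = 0
      · rw [hs, add_zero]
        by_cases hga : g a = 0
        · exact Or.inl hga
        · exact Or.inr (h a (Finset.mem_insert_self a s) hga)
      · have hle := (ih (fun i hi hgi => h i (Finset.mem_insert_of_mem hi) hgi)).resolve_left hs
        by_cases hga : g a = 0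
        · rw [hga, zero_add]; exact Or.inr hle
        · by_cases hsum : g a + ∑ i ∈ s, g i = 0
          · exact Or.inl hsum
          · refine Or.inr (lt_of_lt_of_le ?_ (hν.map_add _ _ hga hs hsum))
            exact lt_min (h a (Finset.mem_insert_self a s) hga) hle

/-- If `t ≠ 0` and `r` is zero or has strictly bigger value, then
`ν (t + r) = ν t` and `t + r ≠ 0`. -/
lemma IsVal.add_dominant (hν : IsVal ν) {t r : Polynomial K} (ht : t ≠ 0)
    (hr : r = 0 ∨ ν t < ν r) : t + r ≠ 0 ∧ ν (t + r) = ν t := by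
  by_cases hr0 : r = 0
  · subst hr0; simpa using ht
  replace hr : ν t < ν r := hr.resolve_left hr0
  have hsum : t + r ≠ 0 := by
    intro h0
    have ht' : t = -r := by
      have := add_eq_zero_iff_eq_neg.mp h0; exact this
    rw [ht', hν.neg hr0] at hr; exact lt_irrefl _ hr
  refine ⟨hsum, le_antisymm ?_ ?_⟩
  · by_contra hlt
    push_neg at hlt
    have ht' : (t + r) + (-r) = t := by ring
    have hmin : min (ν (t + r)) (ν (-r)) ≤ ν t := by
      have := hν.map_add (t + r) (-r) hsum (neg_ne_zero.mpr hr0) (by rw [ht']; exact ht)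
      rwa [ht'] at this
    rw [hν.neg hr0] at hmin
    rcases min_le_iff.mp hmin with h | h <;> linarith
  · calc ν t = min (ν t) (ν r) := (min_eq_left hr.le).symm
      _ ≤ ν (t + r) := hν.map_add t r ht hr0 hsum

/-- A sum with a strictly dominant (minimal-value) term. -/
lemma IsVal.sum_dominant (hν : IsVal ν) {ι : Type*} [DecidableEq ι]
    (s : Finset ι) (g : ι → Polynomial K) {j : ι} (hj : j ∈ s) (hgj : g j ≠ 0)
    (h : ∀ i ∈ s, i ≠ j → g i ≠ 0 → ν (g j) < ν (g i)) :
    (∑ i ∈ s, g i) ≠ 0 ∧ ν (∑ i ∈ s, g i) = ν (g j) := by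
  rw [← Finset.add_sum_erase s g hj]
  refine hν.add_dominant hgj ?_
  refine (hν.sum_lt (s.erase j) g (ν (g j)) ?_)
  intro i hi hgi
  exact h i (Finset.mem_of_mem_erase hi) (Finset.ne_of_mem_erase hi) hgi

end AuxVal

section AuxHasse

variable {ν : Polynomial K → Γ}

lemma hasseDeriv_zero_of_natDegree_lt (f : Polynomial K) {b : ℕ}
    (h : f.natDegree < b) : hasseDeriv b f = 0 := by
  ext n
  rw [Polynomial.hasseDeriv_coeff, Polynomial.coeff_zero,
    Polynomial.coeff_eq_zero_of_natDegree_lt (by omega), mul_zero]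

lemma hasseDeriv_natDegree_ne_zero {f : Polynomial K} (hf : f ≠ 0) :
    hasseDeriv f.natDegree f ≠ 0 := by
  intro h0
  have := congrArg (fun p => Polynomial.coeff p 0) h0
  simp only [Polynomial.hasseDeriv_coeff, Polynomial.coeff_zero, zero_add,
    Nat.choose_self] at this
  simp only [Nat.cast_one, one_mul] at this
  exact hf (Polynomial.leadingCoeff_eq_zero.mp this)

/-- nonemptiness of the defining finset of `eps` for nonconstant `f`. -/
lemma eps_filter_nonempty {f : Polynomial K} (hf : 1 ≤ f.natDegree) :
    ((Finset.Icc 1 f.natDegree).filter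
      fun b => Polynomial.hasseDeriv b f ≠ 0).Nonempty := by
  refine ⟨f.natDegree, Finset.mem_filter.mpr ⟨Finset.mem_Icc.mpr ⟨hf, le_rfl⟩, ?_⟩⟩
  exact hasseDeriv_natDegree_ne_zero (fun h0 => by simp [h0] at hf)

lemma div_le_eps {f : Polynomial K} {b : ℕ} (hb : 1 ≤ b)
    (hd : hasseDeriv b f ≠ 0) :
    (ν f - ν (hasseDeriv b f)) / (b : Γ) ≤ eps ν f := by
  have hble : b ≤ f.natDegree := by
    by_contra hlt; exact hd (hasseDeriv_zero_of_natDegree_lt f (by omega))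
  have hmem : b ∈ (Finset.Icc 1 f.natDegree).filter
      fun b => Polynomial.hasseDeriv b f ≠ 0 :=
    Finset.mem_filter.mpr ⟨Finset.mem_Icc.mpr ⟨hb, hble⟩, hd⟩
  rw [eps, dif_pos ⟨b, hmem⟩]
  exact Finset.le_sup' (fun b => (ν f - ν (Polynomial.hasseDeriv b f)) / (b : Γ)) hmem

lemma val_hasseDeriv_ge {f : Polynomial K} {b : ℕ} (hb : 1 ≤ b)
    (hd : hasseDeriv b f ≠ 0) :
    ν f - (b : Γ) * eps ν f ≤ ν (hasseDeriv b f) := by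
  have hbpos : (0 : Γ) < (b : Γ) := by exact_mod_cast hb
  have := div_le_eps (ν := ν) hb hd
  rw [div_le_iff₀ hbpos] at this
  linarith [this]

lemma exists_eps_eq {f : Polynomial K} (hf : 1 ≤ f.natDegree) :
    ∃ b, 1 ≤ b ∧ hasseDeriv b f ≠ 0 ∧
      ν (hasseDeriv b f) = ν f - (b : Γ) * eps ν f := by
  obtain ⟨b, hmem, hval⟩ := Finset.exists_mem_eq_sup'
    (eps_filter_nonempty (f := f) hf)
    (fun b => (ν f - ν (hasseDeriv b f)) / (b : Γ))
  rw [Finset.mem_filter, Finset.mem_Icc] at hmem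
  refine ⟨b, hmem.1.1, hmem.2, ?_⟩
  have hbpos : (0 : Γ) < (b : Γ) := by exact_mod_cast hmem.1.1
  have : eps ν f = (ν f - ν (hasseDeriv b f)) / (b : Γ) := by
    rw [eps, dif_pos (eps_filter_nonempty hf)]; exact hval
  field_simp at this; linarith

lemma eps_le_of_forall {f : Polynomial K} (hf : 1 ≤ f.natDegree) (c : Γ)
    (H : ∀ b, 1 ≤ b → hasseDeriv b f ≠ 0 → ν f - (b : Γ) * c ≤ ν (hasseDeriv b f)) :
    eps ν f ≤ c := by
  rw [eps, dif_pos (eps_filter_nonempty hf)]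
  refine Finset.sup'_le _ _ ?_
  intro b hmem
  rw [Finset.mem_filter, Finset.mem_Icc] at hmem
  have hbpos : (0 : Γ) < (b : Γ) := by exact_mod_cast hmem.1.1
  rw [div_le_iff₀ hbpos]
  have := H b hmem.1.1 hmem.2
  linarith

lemma lt_eps_of_exists {f : Polynomial K} {b : ℕ} (hb : 1 ≤ b)
    (hd : hasseDeriv b f ≠ 0) {c : Γ}
    (H : ν (hasseDeriv b f) < ν f - (b : Γ) * c) : c < eps ν f := by
  have hbpos : (0 : Γ) < (b : Γ) := by exact_mod_cast hb
  have h1 := div_le_eps (ν := ν) hb hd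
  have h2 : c < (ν f - ν (hasseDeriv b f)) / (b : Γ) := by
    rw [lt_div_iff₀ hbpos]; linarith
  linarith

/-- Key polynomials dominate `eps` of smaller-degree polynomials. -/
lemma eps_lt_of_key {Q : Polynomial K} (hQ : IsKeyPol ν Q) {f : Polynomial K}
    (h1 : 1 ≤ f.natDegree) (h2 : f.natDegree < Q.natDegree) :
    eps ν f < eps ν Q := by
  by_contra hle
  push_neg at hle
  exact absurd (hQ.2.2 f h1 hle) (by omega)

end AuxHasse

section AuxExpansion

variable {ν : Polynomial K → Γ} {q : Polynomial K}

lemma qCoeff_degree_lt (hq : q.Monic) (f : Polynomial K) (i : ℕ) :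
    (qCoeff q f i).degree < q.degree :=
  Polynomial.degree_modByMonic_lt _ hq

lemma qCoeff_succ (hq : q.Monic) (f : Polynomial K) (i : ℕ) :
    qCoeff q f (i + 1) = qCoeff q (f /ₘ q) i := by
  have hqpow : (q ^ (i + 1)).Monic := hq.pow _
  have hq0 : q ≠ 0 := hq.ne_zero
  have htower : f /ₘ q ^ (i + 1) = (f /ₘ q) /ₘ q ^ i := by
    refine (Polynomial.div_modByMonic_unique ((f /ₘ q) /ₘ q ^ i)
      (q * ((f /ₘ q) %ₘ q ^ i) + f %ₘ q) hqpow ⟨?_, ?_⟩).1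
    · have h1 : f %ₘ q + q * (f /ₘ q) = f := Polynomial.modByMonic_add_div f q
      have h2 : (f /ₘ q) %ₘ q ^ i + q ^ i * ((f /ₘ q) /ₘ q ^ i) = f /ₘ q :=
        Polynomial.modByMonic_add_div _ (q ^ i)
      calc q * ((f /ₘ q) %ₘ q ^ i) + f %ₘ q + q ^ (i + 1) * ((f /ₘ q) /ₘ q ^ i)
          = f %ₘ q + q * ((f /ₘ q) %ₘ q ^ i + q ^ i * ((f /ₘ q) /ₘ q ^ i)) := by ring
        _ = f := by rw [h2, h1]
    · have hd1 : (f %ₘ q).degree < q.degree := Polynomial.degree_modByMonic_lt _ hq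
      have hd2 : ((f /ₘ q) %ₘ q ^ i).degree < (q ^ i).degree :=
        Polynomial.degree_modByMonic_lt _ (hq.pow i)
      have hq0i : (q ^ i) ≠ 0 := pow_ne_zero _ hq0
      have hdeg : (q ^ (i + 1)).degree = q.degree + (q ^ i).degree := by
        rw [pow_succ', Polynomial.degree_mul]
      refine lt_of_le_of_lt (Polynomial.degree_add_le _ _) (max_lt ?_ ?_)
      · rw [hdeg, Polynomial.degree_mul]
        exact WithBot.add_lt_add_left
          (fun h => hq0 (Polynomial.degree_eq_bot.mp h)) hd2
      · rw [hdeg]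
        refine lt_of_lt_of_le hd1 (le_add_of_nonneg_right ?_)
        exact Polynomial.zero_le_degree_iff.mpr hq0i
  rw [qCoeff, qCoeff, htower]

lemma qCoeff_sum (hq : q.Monic) (hdq : 1 ≤ q.natDegree) :
    ∀ (N : ℕ) (f : Polynomial K), f.natDegree ≤ N →
      (∑ i ∈ Finset.range (N + 1), qCoeff q f i * q ^ i) = f := by
  have hq0 : q ≠ 0 := hq.ne_zero
  have hdegq : 1 ≤ q.degree := by
    rw [Polynomial.degree_eq_natDegree hq0]; exact_mod_cast hdq
  intro N
  induction N with
  | zero =>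
      intro f hf
      have hfq : f.degree < q.degree := by
        rcases eq_or_ne f 0 with rfl | hf0
        · rw [Polynomial.degree_zero]; exact lt_of_lt_of_le (by exact_mod_cast WithBot.bot_lt_coe 1) hdegq
        · rw [Polynomial.degree_eq_natDegree hf0]
          refine lt_of_lt_of_le ?_ hdegq
          exact_mod_cast Nat.lt_succ_of_le hf
      rw [Finset.sum_range_one, pow_zero, mul_one, qCoeff, pow_zero,
        Polynomial.divByMonic_one]
      exact (Polynomial.modByMonic_eq_self_iff hq).mpr hfq
  | succ N ih =>
      intro f hf
      have hdiv : (f /ₘ q).natDegree ≤ N := by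
        rw [Polynomial.natDegree_divByMonic f hq]; omega
      rw [Finset.sum_range_succ']
      have h0 : qCoeff q f 0 * q ^ 0 = f %ₘ q := by
        simp [qCoeff, Polynomial.divByMonic_one]
      have hs : ∀ i, qCoeff q f (i + 1) * q ^ (i + 1)
          = qCoeff q (f /ₘ q) i * q ^ i * q := by
        intro i; rw [qCoeff_succ hq, pow_succ]; ring
      calc (∑ i ∈ Finset.range (N + 1), qCoeff q f (i + 1) * q ^ (i + 1))
            + qCoeff q f 0 * q ^ 0
          = (∑ i ∈ Finset.range (N + 1), qCoeff q (f /ₘ q) i * q ^ i) * q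
            + f %ₘ q := by
            rw [h0, Finset.sum_mul]; congr 1; exact Finset.sum_congr rfl fun i _ => hs i
        _ = (f /ₘ q) * q + f %ₘ q := by rw [ih (f /ₘ q) hdiv]
        _ = f := by
            have := Polynomial.modByMonic_add_div f q; linear_combination this

lemma qCoeff_ne_zero_natDegree_le (hq : q.Monic) {f : Polynomial K} {i : ℕ}
    (h : qCoeff q f i ≠ 0) : i * q.natDegree ≤ f.natDegree := by
  have hdiv : f /ₘ q ^ i ≠ 0 := by
    intro h0; rw [qCoeff, h0, Polynomial.zero_modByMonic] at h; exact h rfl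
  have hdeg : (q ^ i).degree ≤ f.degree := by
    by_contra hlt
    push_neg at hlt
    exact hdiv ((Polynomial.divByMonic_eq_zero_iff (hq.pow i)).mpr hlt)
  have := Polynomial.natDegree_le_natDegree hdeg
  rwa [hq.natDegree_pow i] at this

lemma qCoeff_le_natDegree (hq : q.Monic) (hdq : 1 ≤ q.natDegree)
    {f : Polynomial K} {i : ℕ} (h : qCoeff q f i ≠ 0) : i ≤ f.natDegree :=
  le_trans (Nat.le_mul_of_pos_right i hdq) (qCoeff_ne_zero_natDegree_le hq h)

lemma trunc_filter_nonempty (hq : q.Monic) (hdq : 1 ≤ q.natDegree)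
    {f : Polynomial K} (hf : f ≠ 0) :
    ((Finset.range (f.natDegree + 1)).filter
      fun i => qCoeff q f i ≠ 0).Nonempty := by
  by_contra hempty
  rw [Finset.not_nonempty_iff_eq_empty, Finset.filter_eq_empty_iff] at hempty
  refine hf ?_
  rw [← qCoeff_sum hq hdq f.natDegree f le_rfl]
  refine Finset.sum_eq_zero fun i hi => ?_
  have := hempty hi
  push_neg at this
  rw [this, zero_mul]

lemma truncVal_le (hq : q.Monic) (hdq : 1 ≤ q.natDegree)
    {f : Polynomial K} (hf : f ≠ 0) {i : ℕ} (h : qCoeff q f i ≠ 0) :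
    truncVal ν q f ≤ ν (qCoeff q f i * q ^ i) := by
  have hmem : i ∈ (Finset.range (f.natDegree + 1)).filter
      fun i => qCoeff q f i ≠ 0 := by
    rw [Finset.mem_filter, Finset.mem_range]
    exact ⟨Nat.lt_succ_of_le (qCoeff_le_natDegree hq hdq h), h⟩
  rw [truncVal, dif_pos ⟨i, hmem⟩]
  exact Finset.inf'_le (fun i => ν (qCoeff q f i * q ^ i)) hmem

lemma exists_truncVal_eq (hq : q.Monic) (hdq : 1 ≤ q.natDegree)
    {f : Polynomial K} (hf : f ≠ 0) :
    ∃ i, qCoeff q f i ≠ 0 ∧ ν (qCoeff q f i * q ^ i) = truncVal ν q f := by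
  obtain ⟨i, hmem, hval⟩ := Finset.exists_mem_eq_inf'
    (trunc_filter_nonempty hq hdq hf) (fun i => ν (qCoeff q f i * q ^ i))
  rw [Finset.mem_filter] at hmem
  refine ⟨i, hmem.2, ?_⟩
  rw [truncVal, dif_pos (trunc_filter_nonempty hq hdq hf), hval]

lemma truncVal_le_val (hν : IsVal ν) (hq : q.Monic) (hdq : 1 ≤ q.natDegree)
    {f : Polynomial K} (hf : f ≠ 0) : truncVal ν q f ≤ ν f := by
  have hsum := qCoeff_sum hq hdq f.natDegree f le_rfl
  have := hν.sum_le (Finset.range (f.natDegree + 1))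
    (fun i => qCoeff q f i * q ^ i) (truncVal ν q f) ?_
  · rw [hsum] at this; exact this.resolve_left hf
  · intro i _ hne
    have hc : qCoeff q f i ≠ 0 := fun h0 => hne (by simp [h0])
    exact truncVal_le hq hdq hf hc

end AuxExpansion

section AuxKey

variable {ν : Polynomial K → Γ}

/-- helper: sum of two "zero or strictly above `c`" terms. -/
lemma IsVal.add_cases (hν : IsVal ν) {c : Γ} {x y : Polynomial K}
    (hx : x = 0 ∨ c < ν x) (hy : y = 0 ∨ c < ν y) :
    x + y = 0 ∨ c < ν (x + y) := by
  by_cases hx0 : x = 0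
  · subst hx0; simpa using hy
  by_cases hy0 : y = 0
  · subst hy0; simp only [add_zero]; exact hx
  have hx' := hx.resolve_left hx0
  have hy' := hy.resolve_left hy0
  by_cases h0 : x + y = 0
  · exact Or.inl h0
  · exact Or.inr (lt_of_lt_of_le (lt_min hx' hy') (hν.map_add _ _ hx0 hy0 h0))

/-- Lemma T: lower bound for `ν (∂_d (Q^i))`. -/
lemma pow_hasse_lb (hν : IsVal ν) {Q : Polynomial K} (hQ0 : Q ≠ 0) :
    ∀ (i d : ℕ), hasseDeriv d (Q ^ i) ≠ 0 →
      (i : Γ) * ν Q - (d : Γ) * eps ν Q ≤ ν (hasseDeriv d (Q ^ i)) := by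
  intro i
  induction i with
  | zero =>
      intro d hd
      match d with
      | 0 => simp [hν.one]
      | d + 1 =>
          exact absurd (hasseDeriv_zero_of_natDegree_lt (Q ^ 0) (by simp)) hd
  | succ i ih =>
      intro d hd
      rw [pow_succ, Polynomial.hasseDeriv_mul] at hd ⊢
      have hbound : ∀ cd ∈ Finset.HasAntidiagonal.antidiagonal d,
          hasseDeriv cd.1 (Q ^ i) * hasseDeriv cd.2 Q ≠ 0 →
          ((i + 1 : ℕ) : Γ) * ν Q - (d : Γ) * eps ν Q ≤
            ν (hasseDeriv cd.1 (Q ^ i) * hasseDeriv cd.2 Q) := by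
        rintro ⟨c, e⟩ hmem hne
        have hce : c + e = d := Finset.HasAntidiagonal.mem_antidiagonal.mp hmem
        have h1 : hasseDeriv c (Q ^ i) ≠ 0 := fun h => hne (by simp [h])
        have h2 : hasseDeriv e Q ≠ 0 := fun h => hne (by simp [h])
        rw [hν.map_mul _ _ h1 h2]
        have hb1 := ih c h1
        have hb2 : ν Q - (e : Γ) * eps ν Q ≤ ν (hasseDeriv e Q) := by
          match e with
          | 0 => simp
          | e + 1 => exact val_hasseDeriv_ge (Nat.succ_le_succ (Nat.zero_le e)) h2
        have hε : (c : Γ) * eps ν Q + (e : Γ) * eps ν Q = (d : Γ) * eps ν Q := by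
          rw [← hce]; push_cast; ring
        have hcast : ((i + 1 : ℕ) : Γ) = (i : Γ) + 1 := by push_cast; ring
        rw [hcast]; linarith
      rcases hν.sum_le (Finset.HasAntidiagonal.antidiagonal d) _ _ hbound with h0 | hle
      · exact absurd h0 hd
      · exact hle

/-- The maximal element of `I(Q)`. -/
lemma exists_max_I (hν : IsVal ν) {Q : Polynomial K} (hQ1 : 1 ≤ Q.natDegree) :
    ∃ b, 1 ≤ b ∧ hasseDeriv b Q ≠ 0 ∧
      ν (hasseDeriv b Q) = ν Q - (b : Γ) * eps ν Q ∧
      ∀ e, b < e → hasseDeriv e Q ≠ 0 →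
        ν Q - (e : Γ) * eps ν Q < ν (hasseDeriv e Q) := by
  classical
  set J := (Finset.Icc 1 Q.natDegree).filter
    (fun e => hasseDeriv e Q ≠ 0 ∧
      ν (hasseDeriv e Q) = ν Q - (e : Γ) * eps ν Q) with hJ
  have hJne : J.Nonempty := by
    obtain ⟨b, hb1, hbne, hbeq⟩ := exists_eps_eq (ν := ν) hQ1
    have hble : b ≤ Q.natDegree := by
      by_contra hlt
      exact hbne (hasseDeriv_zero_of_natDegree_lt Q (by omega))
    exact ⟨b, Finset.mem_filter.mpr ⟨Finset.mem_Icc.mpr ⟨hb1, hble⟩, hbne, hbeq⟩⟩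
  obtain ⟨hmem, hne, heq⟩ := Finset.mem_filter.mp (J.max'_mem hJne)
  rw [Finset.mem_Icc] at hmem
  refine ⟨J.max' hJne, hmem.1, hne, heq, ?_⟩
  intro e hbe hene
  have he1 : 1 ≤ e := by omega
  have hle := val_hasseDeriv_ge (ν := ν) he1 hene
  rcases lt_or_eq_of_le hle with h | h
  · linarith
  · exfalso
    have hele : e ≤ Q.natDegree := by
      by_contra hlt
      exact hene (hasseDeriv_zero_of_natDegree_lt Q (by omega))
    have : e ∈ J := Finset.mem_filter.mpr ⟨Finset.mem_Icc.mpr ⟨he1, hele⟩, hene, h.symm⟩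
    exact absurd (Finset.le_max' J e this) (by omega)

/-- Claims (a) and (b): strict bounds above `i*b`, and the exact dominant
term at `i*b`. -/
lemma pow_hasse_claims (hν : IsVal ν) {Q : Polynomial K} (hQ0 : Q ≠ 0)
    {b : ℕ} (hb1 : 1 ≤ b) (hbne : hasseDeriv b Q ≠ 0)
    (hbeq : ν (hasseDeriv b Q) = ν Q - (b : Γ) * eps ν Q)
    (hbmax : ∀ e, b < e → hasseDeriv e Q ≠ 0 →
      ν Q - (e : Γ) * eps ν Q < ν (hasseDeriv e Q)) :
    ∀ i : ℕ,
      (∀ d, i * b < d → hasseDeriv d (Q ^ i) ≠ 0 →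
        (i : Γ) * ν Q - (d : Γ) * eps ν Q < ν (hasseDeriv d (Q ^ i))) ∧
      (∃ R, hasseDeriv (i * b) (Q ^ i) = (hasseDeriv b Q) ^ i + R ∧
        (R = 0 ∨ (i : Γ) * ν Q - ((i * b : ℕ) : Γ) * eps ν Q < ν R)) := by
  intro i
  induction i with
  | zero =>
      constructor
      · intro d hd hne
        exact absurd (hasseDeriv_zero_of_natDegree_lt (Q ^ 0) (by simpa using hd)) hne
      · exact ⟨0, by simp, Or.inl rfl⟩
  | succ i ih =>
      have key_strict : ∀ (c e d : ℕ), c + e = d → (i + 1) * b ≤ d →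
          (i * b < c ∨ b < e) →
          hasseDeriv c (Q ^ i) * hasseDeriv e Q ≠ 0 →
          ((i + 1 : ℕ) : Γ) * ν Q - (d : Γ) * eps ν Q <
            ν (hasseDeriv c (Q ^ i) * hasseDeriv e Q) := by
        intro c e d hce hd hcases hne
        have h1 : hasseDeriv c (Q ^ i) ≠ 0 := fun h => hne (by simp [h])
        have h2 : hasseDeriv e Q ≠ 0 := fun h => hne (by simp [h])
        rw [hν.map_mul _ _ h1 h2]
        have hε : (c : Γ) * eps ν Q + (e : Γ) * eps ν Q = (d : Γ) * eps ν Q := by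
          rw [← hce]; push_cast; ring
        have hcast : ((i + 1 : ℕ) : Γ) = (i : Γ) + 1 := by push_cast; ring
        rw [hcast]
        rcases hcases with hc | he
        · have hs1 := ih.1 c hc h1
          have hs2 : ν Q - (e : Γ) * eps ν Q ≤ ν (hasseDeriv e Q) := by
            match e with
            | 0 => simp
            | e + 1 => exact val_hasseDeriv_ge (Nat.succ_le_succ (Nat.zero_le e)) h2
          linarith
        · have hs1 := pow_hasse_lb hν hQ0 i c h1
          have hs2 := hbmax e he h2
          linarith
      have case_split : ∀ (c e d : ℕ), c + e = d → (i + 1) * b ≤ d →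
          (c, e) ≠ (i * b, b) → (i * b < c ∨ b < e) := by
        intro c e d hce hd hpair
        rcases lt_or_ge (i * b) c with hc | hc
        · exact Or.inl hc
        · right
          have hdib : i * b + b ≤ d := by
            have : (i + 1) * b = i * b + b := by ring
            omega
          rcases lt_or_ge b e with he | he
          · exact he
          · exfalso
            -- c ≤ i*b and e ≤ b and c + e = d ≥ i*b + b forces c = i*b, e = b
            have hc' : c = i * b := by omega
            have he' : e = b := by omega
            exact hpair (by rw [hc', he'])
      constructor
      · -- claim (a)
        intro d hd hne
        rw [pow_succ, Polynomial.hasseDeriv_mul] at hne ⊢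
        have hbound : ∀ cd ∈ Finset.HasAntidiagonal.antidiagonal d,
            hasseDeriv cd.1 (Q ^ i) * hasseDeriv cd.2 Q ≠ 0 →
            ((i + 1 : ℕ) : Γ) * ν Q - (d : Γ) * eps ν Q <
              ν (hasseDeriv cd.1 (Q ^ i) * hasseDeriv cd.2 Q) := by
          rintro ⟨c, e⟩ hmem hne'
          have hce : c + e = d := Finset.HasAntidiagonal.mem_antidiagonal.mp hmem
          refine key_strict c e d hce (le_of_lt hd) ?_ hne'
          rcases lt_or_ge (i * b) c with hc | hc
          · exact Or.inl hc
          · right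
            have : (i + 1) * b = i * b + b := by ring
            omega
        rcases hν.sum_lt (Finset.HasAntidiagonal.antidiagonal d) _ _ hbound with h0 | hlt
        · exact absurd h0 hne
        · exact hlt
      · -- claim (b)
        obtain ⟨R, hReq, hRval⟩ := ih.2
        have hib : (i + 1) * b = i * b + b := by ring
        have hmem : ((i * b, b) : ℕ × ℕ) ∈ Finset.HasAntidiagonal.antidiagonal ((i + 1) * b) := by
          rw [Finset.HasAntidiagonal.mem_antidiagonal]; omega
        rw [pow_succ, Polynomial.hasseDeriv_mul]
        rw [← Finset.add_sum_erase _ _ hmem]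
        refine ⟨R * hasseDeriv b Q +
          ∑ cd ∈ (Finset.HasAntidiagonal.antidiagonal ((i + 1) * b)).erase (i * b, b),
            hasseDeriv cd.1 (Q ^ i) * hasseDeriv cd.2 Q, ?_, ?_⟩
        · rw [hReq]; ring
        · have htar : ∀ x : Polynomial K,
              (x = 0 ∨ ((i + 1 : ℕ) : Γ) * ν Q - (((i + 1) * b : ℕ) : Γ) * eps ν Q < ν x) →
              (x = 0 ∨ ((i + 1 : ℕ) : Γ) * ν Q - (((i + 1) * b : ℕ) : Γ) * eps ν Q < ν x) :=
            fun _ h => h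
          refine hν.add_cases ?_ ?_
          · by_cases hR0 : R = 0
            · exact Or.inl (by simp [hR0])
            · right
              have hRv := hRval.resolve_left hR0
              rw [hν.map_mul _ _ hR0 hbne, hbeq]
              have hc1 : ((i + 1 : ℕ) : Γ) = (i : Γ) + 1 := by push_cast; ring
              have hc2 : (((i + 1) * b : ℕ) : Γ) = ((i * b : ℕ) : Γ) + (b : Γ) := by
                push_cast; ring
              rw [hc1, hc2]
              have hc3 : ((i * b : ℕ) : Γ) = (i : Γ) * (b : Γ) := by push_cast; ring
              rw [hc3] at hRv ⊢
              linarith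
          · refine hν.sum_lt _ _ _ ?_
            rintro ⟨c, e⟩ hmem' hne'
            have hcd := Finset.HasAntidiagonal.mem_antidiagonal.mp (Finset.mem_of_mem_erase hmem')
            have hnepair : ((c, e) : ℕ × ℕ) ≠ (i * b, b) := Finset.ne_of_mem_erase hmem'
            exact key_strict c e ((i + 1) * b) hcd le_rfl
              (case_split c e ((i + 1) * b) hcd le_rfl hnepair) hne'

/-- The exact value of `ν (∂_{i·b} (Q^i))`. -/
lemma pow_hasse_exact (hν : IsVal ν) {Q : Polynomial K} (hQ0 : Q ≠ 0)
    {b : ℕ} (hb1 : 1 ≤ b) (hbne : hasseDeriv b Q ≠ 0)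
    (hbeq : ν (hasseDeriv b Q) = ν Q - (b : Γ) * eps ν Q)
    (hbmax : ∀ e, b < e → hasseDeriv e Q ≠ 0 →
      ν Q - (e : Γ) * eps ν Q < ν (hasseDeriv e Q)) (i : ℕ) :
    hasseDeriv (i * b) (Q ^ i) ≠ 0 ∧
      ν (hasseDeriv (i * b) (Q ^ i))
        = (i : Γ) * ν Q - ((i * b : ℕ) : Γ) * eps ν Q := by
  obtain ⟨R, hReq, hRval⟩ := (pow_hasse_claims hν hQ0 hb1 hbne hbeq hbmax i).2
  have hpow : ν ((hasseDeriv b Q) ^ i) = (i : Γ) * ν Q - ((i * b : ℕ) : Γ) * eps ν Q := by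
    rw [hν.pow hbne i, hbeq]; push_cast; ring
  have hpne : (hasseDeriv b Q) ^ i ≠ 0 := pow_ne_zero _ hbne
  have hr : R = 0 ∨ ν ((hasseDeriv b Q) ^ i) < ν R := by
    rcases hRval with h | h
    · exact Or.inl h
    · right; rw [hpow]; exact h
  have hdom := hν.add_dominant hpne hr
  rw [← hReq] at hdom
  exact ⟨hdom.1, by rw [hdom.2, hpow]⟩

end AuxKey

section Main

variable {ν : Polynomial K → Γ}

/-- Per-term bound in the expansion of `∂_{b}(g · Q^i)`, `deg g < deg Q`. -/
lemma coeff_term_bound (hν : IsVal ν) {Q : Polynomial K} (hQ : IsKeyPol ν Q)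
    {g : Polynomial K} (hg : g ≠ 0) (hdeg : g.degree < Q.degree)
    (i c e : ℕ) (hne : hasseDeriv c g * hasseDeriv e (Q ^ i) ≠ 0) :
    (ν g + (i : Γ) * ν Q - ((c : Γ) + (e : Γ)) * eps ν Q ≤
      ν (hasseDeriv c g * hasseDeriv e (Q ^ i)))
    ∧ (1 ≤ c → ν g + (i : Γ) * ν Q - ((c : Γ) + (e : Γ)) * eps ν Q <
      ν (hasseDeriv c g * hasseDeriv e (Q ^ i))) := by
  have h1 : hasseDeriv c g ≠ 0 := fun h => hne (by simp [h])
  have h2 : hasseDeriv e (Q ^ i) ≠ 0 := fun h => hne (by simp [h])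
  have hQ0 : Q ≠ 0 := hQ.1.ne_zero
  have hb2 := pow_hasse_lb hν hQ0 i e h2
  rw [hν.map_mul _ _ h1 h2]
  rcases Nat.eq_zero_or_pos c with rfl | hc
  · have hg0 : hasseDeriv 0 g = g := by simp
    rw [hg0]
    constructor
    · push_cast; linarith
    · intro h; exact absurd h (by omega)
  · have hg1 : 1 ≤ g.natDegree := by
      by_contra h
      push_neg at h
      exact h1 (hasseDeriv_zero_of_natDegree_lt g (by omega))
    have hgd : g.natDegree < Q.natDegree :=
      Polynomial.natDegree_lt_natDegree hg hdeg
    have heps := eps_lt_of_key hQ hg1 hgd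
    have hb1 := val_hasseDeriv_ge (ν := ν) hc h1
    have hcpos : (0 : Γ) < (c : Γ) := by exact_mod_cast hc
    have hstrict : (c : Γ) * eps ν g < (c : Γ) * eps ν Q :=
      mul_lt_mul_of_pos_left heps hcpos
    constructor
    · nlinarith
    · intro _; nlinarith

/-- If `ν_Q(f) = ν(f)` then `ε(f) ≤ ε(Q)`. -/
lemma eps_le_of_trunc_eq (hν : IsVal ν) {Q : Polynomial K} (hQ : IsKeyPol ν Q)
    {f : Polynomial K} (hf : f ≠ 0) (hf1 : 1 ≤ f.natDegree)
    (heq : truncVal ν Q f = ν f) : eps ν f ≤ eps ν Q := by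
  have hQm := hQ.1
  have hQ1 := hQ.2.1
  have hQ0 : Q ≠ 0 := hQm.ne_zero
  refine eps_le_of_forall hf1 _ ?_
  intro b0 hb0 hbne
  have hexp : (∑ i ∈ Finset.range (f.natDegree + 1), qCoeff Q f i * Q ^ i) = f :=
    qCoeff_sum hQm hQ1 _ f le_rfl
  have hder : hasseDeriv b0 f
      = ∑ i ∈ Finset.range (f.natDegree + 1),
          hasseDeriv b0 (qCoeff Q f i * Q ^ i) := by
    conv_lhs => rw [← hexp]
    exact map_sum _ _ _
  rw [hder] at hbne ⊢
  have hbound : ∀ i ∈ Finset.range (f.natDegree + 1),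
      hasseDeriv b0 (qCoeff Q f i * Q ^ i) ≠ 0 →
      ν f - (b0 : Γ) * eps ν Q ≤ ν (hasseDeriv b0 (qCoeff Q f i * Q ^ i)) := by
    intro i _ hnei
    have hfi : qCoeff Q f i ≠ 0 := by
      intro h0; rw [h0, zero_mul] at hnei; simp at hnei
    have hvi : truncVal ν Q f ≤ ν (qCoeff Q f i) + (i : Γ) * ν Q := by
      have := truncVal_le (ν := ν) hQm hQ1 hf hfi
      rwa [hν.map_mul _ _ hfi (pow_ne_zero i hQ0), hν.pow hQ0 i] at this
    rw [Polynomial.hasseDeriv_mul] at hnei ⊢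
    have hin : ∀ cd ∈ Finset.HasAntidiagonal.antidiagonal b0,
        hasseDeriv cd.1 (qCoeff Q f i) * hasseDeriv cd.2 (Q ^ i) ≠ 0 →
        ν f - (b0 : Γ) * eps ν Q ≤
          ν (hasseDeriv cd.1 (qCoeff Q f i) * hasseDeriv cd.2 (Q ^ i)) := by
      rintro ⟨c, e⟩ hmem hne'
      have hce : c + e = b0 := Finset.HasAntidiagonal.mem_antidiagonal.mp hmem
      have hb := (coeff_term_bound hν hQ hfi (qCoeff_degree_lt hQm f i) i c e hne').1
      have hε : (c : Γ) + (e : Γ) = (b0 : Γ) := by rw [← hce]; push_cast; ring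
      rw [hε] at hb
      rw [← heq]
      linarith
    rcases hν.sum_le _ _ _ hin with h0 | hle
    · exact absurd h0 hnei
    · exact hle
  rcases hν.sum_le _ _ _ hbound with h0 | hle
  · exact absurd h0 hbne
  · exact hle

/-- If `ν_Q(f) < ν(f)` then `ε(Q) < ε(f)`. -/
lemma eps_lt_of_trunc_lt (hν : IsVal ν) {Q : Polynomial K} (hQ : IsKeyPol ν Q)
    {f : Polynomial K} (hf : f ≠ 0)
    (hlt : truncVal ν Q f < ν f) : eps ν Q < eps ν f := by
  classical
  have hQm := hQ.1
  have hQ1 := hQ.2.1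
  have hQ0 : Q ≠ 0 := hQm.ne_zero
  set n := f.natDegree with hn
  set V := truncVal ν Q f with hV
  -- the set of indices realizing the minimum
  set S := (Finset.range (n + 1)).filter
    (fun i => qCoeff Q f i ≠ 0 ∧ ν (qCoeff Q f i * Q ^ i) = V) with hS
  have hSne : S.Nonempty := by
    obtain ⟨i, hi1, hi2⟩ := exists_truncVal_eq (ν := ν) hQm hQ1 hf
    exact ⟨i, Finset.mem_filter.mpr ⟨Finset.mem_range.mpr
      (Nat.lt_succ_of_le (qCoeff_le_natDegree hQm hQ1 hi1)), hi1, hi2⟩⟩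
  set δ := S.max' hSne with hδ
  obtain ⟨hδmem, hδne, hδval⟩ := Finset.mem_filter.mp (S.max'_mem hSne)
  have hδmax : ∀ i ∈ S, i ≤ δ := fun i hi => Finset.le_max' S i hi
  -- value formulas for terms
  have hterm : ∀ i, qCoeff Q f i ≠ 0 →
      ν (qCoeff Q f i * Q ^ i) = ν (qCoeff Q f i) + (i : Γ) * ν Q := by
    intro i h
    rw [hν.map_mul _ _ h (pow_ne_zero i hQ0), hν.pow hQ0 i]
  -- δ ≥ 1
  have hδ1 : 1 ≤ δ := by
    by_contra h0
    push_neg at h0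
    have hmain : ∀ i ∈ Finset.range (n + 1), i ≠ δ →
        qCoeff Q f i * Q ^ i ≠ 0 →
        ν (qCoeff Q f δ * Q ^ δ) < ν (qCoeff Q f i * Q ^ i) := by
      intro i hi hine hgne
      have hfi : qCoeff Q f i ≠ 0 := fun h => hgne (by simp [h])
      have hvi : V ≤ ν (qCoeff Q f i * Q ^ i) := truncVal_le hQm hQ1 hf hfi
      rw [hδval]
      rcases lt_or_eq_of_le hvi with h | h
      · exact h
      · exact absurd (hδmax i (Finset.mem_filter.mpr ⟨hi, hfi, h.symm⟩))
          (by omega)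
    have hgδ : qCoeff Q f δ * Q ^ δ ≠ 0 := mul_ne_zero hδne (pow_ne_zero δ hQ0)
    have hdom := hν.sum_dominant (Finset.range (n + 1))
      (fun i => qCoeff Q f i * Q ^ i) hδmem hgδ hmain
    have hsum_eq : (∑ i ∈ Finset.range (n + 1), qCoeff Q f i * Q ^ i) = f :=
      qCoeff_sum hQm hQ1 n f le_rfl
    rw [hsum_eq] at hdom
    rw [hdom.2, hδval] at hlt
    exact lt_irrefl _ hlt
  -- the maximal index b of I(Q)
  obtain ⟨b, hb1, hbne, hbeq, hbmax⟩ := exists_max_I hν hQ1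
  have hbQ : b ≤ Q.natDegree := by
    by_contra h
    exact hbne (hasseDeriv_zero_of_natDegree_lt Q (by omega))
  set b' := δ * b with hb'
  have hb'1 : 1 ≤ b' := Nat.one_le_iff_ne_zero.mpr (by positivity)
  have hb'n : b' ≤ n := by
    calc δ * b ≤ δ * Q.natDegree := Nat.mul_le_mul_left δ hbQ
      _ ≤ n := qCoeff_ne_zero_natDegree_le hQm hδne
  -- the claims about ∂_d (Q^i)
  have hclaims := pow_hasse_claims hν hQ0 hb1 hbne hbeq hbmax
  have hexact := pow_hasse_exact hν hQ0 hb1 hbne hbeq hbmax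
  -- inner sums: value of ∂_{b'}(f_i Q^i)
  have hexp : (∑ i ∈ Finset.range (n + 1), qCoeff Q f i * Q ^ i) = f :=
    qCoeff_sum hQm hQ1 n f le_rfl
  have hder : hasseDeriv b' f
      = ∑ i ∈ Finset.range (n + 1), hasseDeriv b' (qCoeff Q f i * Q ^ i) := by
    conv_lhs => rw [← hexp]
    exact map_sum _ _ _
  -- dominant index δ
  have hstep1 : hasseDeriv b' (qCoeff Q f δ * Q ^ δ) ≠ 0 ∧
      ν (hasseDeriv b' (qCoeff Q f δ * Q ^ δ)) = V - (b' : Γ) * eps ν Q := by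
    rw [Polynomial.hasseDeriv_mul]
    have hj : ((0, b') : ℕ × ℕ) ∈ Finset.HasAntidiagonal.antidiagonal b' := by
      rw [Finset.HasAntidiagonal.mem_antidiagonal]; omega
    have hQδ := hexact δ
    rw [← hb'] at hQδ
    have hgj : hasseDeriv 0 (qCoeff Q f δ) * hasseDeriv b' (Q ^ δ) ≠ 0 := by
      have h0 : hasseDeriv 0 (qCoeff Q f δ) = qCoeff Q f δ := by simp
      rw [h0]
      exact mul_ne_zero hδne hQδ.1
    have hdom := hν.sum_dominant (Finset.HasAntidiagonal.antidiagonal b')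
      (fun cd => hasseDeriv cd.1 (qCoeff Q f δ) * hasseDeriv cd.2 (Q ^ δ))
      hj hgj ?_
    · refine ⟨hdom.1, ?_⟩
      rw [hdom.2]
      simp only
      have h0 : hasseDeriv 0 (qCoeff Q f δ) = qCoeff Q f δ := by simp
      rw [h0, hν.map_mul _ _ hδne hQδ.1, hQδ.2]
      rw [hterm δ hδne] at hδval
      have hbb : ((δ * b : ℕ) : Γ) = (b' : Γ) := by rw [hb']
      rw [hbb]
      linarith
    · rintro ⟨c, e⟩ hmem hpair hne'
      simp only at hne' ⊢
      have hce : c + e = b' := Finset.HasAntidiagonal.mem_antidiagonal.mp hmem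
      have hc1 : 1 ≤ c := by
        rcases Nat.eq_zero_or_pos c with rfl | h
        · exfalso; apply hpair; simp at hce ⊢; omega
        · exact h
      have hb := (coeff_term_bound hν hQ hδne (qCoeff_degree_lt hQm f δ) δ c e hne').2 hc1
      have h0 : hasseDeriv 0 (qCoeff Q f δ) = qCoeff Q f δ := by simp
      rw [h0, hν.map_mul _ _ hδne hQδ.1, hQδ.2]
      have hε : (c : Γ) + (e : Γ) = (b' : Γ) := by rw [← hce]; push_cast; ring
      have hbb : ((δ * b : ℕ) : Γ) = (b' : Γ) := by rw [hb']
      rw [hε] at hb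
      rw [hbb]
      linarith
  -- other indices are strictly above
  have hstep2 : ∀ i ∈ Finset.range (n + 1), i ≠ δ →
      hasseDeriv b' (qCoeff Q f i * Q ^ i) ≠ 0 →
      V - (b' : Γ) * eps ν Q < ν (hasseDeriv b' (qCoeff Q f i * Q ^ i)) := by
    intro i hi hine hnei
    have hfi : qCoeff Q f i ≠ 0 := by
      intro h0; rw [h0, zero_mul] at hnei; simp at hnei
    have hvi : V ≤ ν (qCoeff Q f i) + (i : Γ) * ν Q := by
      have := truncVal_le (ν := ν) hQm hQ1 hf hfi
      rwa [hterm i hfi] at this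
    rw [Polynomial.hasseDeriv_mul] at hnei ⊢
    have hin : ∀ cd ∈ Finset.HasAntidiagonal.antidiagonal b',
        hasseDeriv cd.1 (qCoeff Q f i) * hasseDeriv cd.2 (Q ^ i) ≠ 0 →
        V - (b' : Γ) * eps ν Q <
          ν (hasseDeriv cd.1 (qCoeff Q f i) * hasseDeriv cd.2 (Q ^ i)) := by
      rintro ⟨c, e⟩ hmem hne'
      have hce : c + e = b' := Finset.HasAntidiagonal.mem_antidiagonal.mp hmem
      have hε : (c : Γ) + (e : Γ) = (b' : Γ) := by rw [← hce]; push_cast; ring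
      rcases Nat.eq_zero_or_pos c with rfl | hc1
      · -- c = 0, e = b'
        have he : e = b' := by omega
        subst he
        have h1 : hasseDeriv 0 (qCoeff Q f i) = qCoeff Q f i := by simp
        have h2 : hasseDeriv b' (Q ^ i) ≠ 0 := fun h => hne' (by simp [h])
        rw [h1] at hne' ⊢
        rw [hν.map_mul _ _ hfi h2]
        rcases lt_or_ge i δ with hiδ | hiδ
        · -- i < δ: strict bound from claim (a)
          have hib : i * b < b' := by
            have h1 : (i + 1) * b ≤ δ * b := Nat.mul_le_mul_right b hiδ
            have h2 : i * b < (i + 1) * b := by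
              rw [Nat.succ_mul]
              exact Nat.lt_add_of_pos_right (n := i * b) (show 0 < b by omega)
            exact lt_of_lt_of_le h2 h1
          have hstrict := (hclaims i).1 b' hib h2
          linarith
        · -- i > δ: i ∉ S so ν(f_i Q^i) > V
          have hiδ' : δ < i := by omega
          have hnotS : V < ν (qCoeff Q f i) + (i : Γ) * ν Q := by
            rcases lt_or_eq_of_le hvi with h | h
            · exact h
            · exfalso
              have : i ∈ S := Finset.mem_filter.mpr ⟨hi, hfi, by rw [hterm i hfi]; exact h.symm⟩
              exact absurd (hδmax i this) (by omega)
          have hweak := pow_hasse_lb hν hQ0 i b' h2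
          linarith
      · -- c ≥ 1: strict via the coefficient factor
        have hb := (coeff_term_bound hν hQ hfi (qCoeff_degree_lt hQm f i) i c e hne').2 hc1
        rw [hε] at hb
        linarith
    rcases hν.sum_lt _ _ _ hin with h0 | hle
    · exact absurd h0 hnei
    · exact hle
  -- combine
  have hdom := hν.sum_dominant (Finset.range (n + 1))
    (fun i => hasseDeriv b' (qCoeff Q f i * Q ^ i)) hδmem hstep1.1
    (fun i hi hine hgne => by
      have := hstep2 i hi hine hgne
      rw [hstep1.2]
      exact this)
  rw [← hder] at hdom
  refine lt_eps_of_exists hb'1 hdom.1 ?_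
  rw [hdom.2, hstep1.2]
  have hbpos : (0 : Γ) < (b' : Γ) := by exact_mod_cast hb'1
  linarith

/-- `truncVal` of the constant `1`. -/
lemma truncVal_one {q : Polynomial K} (hq : q.Monic) (hdq : 1 ≤ q.natDegree) :
    truncVal ν q (1 : Polynomial K) = ν 1 := by
  have hdegq : 1 ≤ q.degree := by
    rw [Polynomial.degree_eq_natDegree hq.ne_zero]; exact_mod_cast hdq
  have h0 : qCoeff q 1 0 = 1 := by
    rw [qCoeff, pow_zero, Polynomial.divByMonic_one]
    refine (Polynomial.modByMonic_eq_self_iff hq).mpr ?_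
    rw [Polynomial.degree_one]
    exact lt_of_lt_of_le (by exact_mod_cast zero_lt_one) hdegq
  have hne : ((Finset.range ((1 : Polynomial K).natDegree + 1)).filter
      fun i => qCoeff q 1 i ≠ 0).Nonempty := by
    refine ⟨0, Finset.mem_filter.mpr ⟨Finset.mem_range.mpr (by simp), ?_⟩⟩
    rw [h0]; exact one_ne_zero
  have hfilter : ((Finset.range ((1 : Polynomial K).natDegree + 1)).filter
      fun i => qCoeff q 1 i ≠ 0) = {0} := by
    rw [Polynomial.natDegree_one]
    rw [Finset.range_one, Finset.filter_singleton, if_pos]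
    rw [h0]; exact one_ne_zero
  have hmem0 : 0 ∈ (Finset.range ((1 : Polynomial K).natDegree + 1)).filter
      (fun i => qCoeff q 1 i ≠ 0) := by
    refine Finset.mem_filter.mpr ⟨Finset.mem_range.mpr (by simp), ?_⟩
    rw [h0]; exact one_ne_zero
  have hval0 : ν (qCoeff q 1 0 * q ^ 0) = ν 1 := by rw [h0, pow_zero, mul_one]
  rw [truncVal, dif_pos hne]
  refine le_antisymm (le_trans (Finset.inf'_le _ hmem0) (le_of_eq hval0)) ?_
  refine Finset.le_inf' hne _ ?_
  intro i hi
  rw [hfilter, Finset.mem_singleton] at hi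
  subst hi
  exact le_of_eq hval0.symm

end Main

/-- Every element of `Ψ(Q)` is a key polynomial, of level `> ε(Q)`. -/
theorem Psi_isKeyPol (ν : Polynomial K → Γ) (hν : IsVal ν)
    (Q : Polynomial K) (hQ : IsKeyPol ν Q) (Q' : Polynomial K)
    (hQ' : Q' ∈ Psi ν Q) :
    IsKeyPol ν Q' ∧ eps ν Q < eps ν Q' := by
  obtain ⟨hmon, hlt, hmin⟩ := hQ'
  have hQm := hQ.1
  have hQ1 := hQ.2.1
  have hQ'0 : Q' ≠ 0 := hmon.ne_zero
  have hQ'1 : 1 ≤ Q'.natDegree := by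
    by_contra h
    push_neg at h
    have hone : Q' = 1 := Polynomial.eq_one_of_monic_natDegree_zero hmon (by omega)
    rw [hone, truncVal_one hQm hQ1] at hlt
    exact lt_irrefl _ hlt
  have hepslt : eps ν Q < eps ν Q' := eps_lt_of_trunc_lt hν hQ hQ'0 hlt
  refine ⟨⟨hmon, hQ'1, ?_⟩, hepslt⟩
  intro f hf1 hfe
  have hf0 : f ≠ 0 := by
    intro h; rw [h] at hf1; simp at hf1
  refine hmin f hf0 ?_
  rcases lt_or_eq_of_le (truncVal_le_val hν hQm hQ1 hf0) with h | h
  · exact h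
  · exfalso
    have := eps_le_of_trunc_eq hν hQ hf0 hf1 h
    linarith
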